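/- Submodularity of the penalty part pen_2: Let V' be a finite set, p ≥ 1, M_j : V' → ℝ with M_j(i) ≥ 0 for all i (j = 1,…,p), k_j, l_j ∈ ℝ, and D : V' × V' → ℝ symmetric with D(u,v) ≥ 0 for all u,v. Then the set function pen_2(A) := ∑_{j=1}^p min{l_j, ∑_{i∈A} M_j(i)} + ∑_{j=1}^p min{k_j, ∑_{i∈A} M_j(i)} − ∑_{u∈A, v∈A} D(u,v) is submodular, i.e., pen_2(A∪B) + pen_2(A∩B) ≤ pen_2(A) + pen_2(B) for all A, B ⊆ V'. -/
import Mathlib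


open Finset

private lemma min_lemma (c a b u w : ℝ) (huw : u + w = a + b) (hwa : w ≤ a) (hwb : w ≤ b) :
    min c u + min c w ≤ min c a + min c b := by
  rcases le_total c a with h1 | h1 <;> rcases le_total c b with h2 | h2 <;>
    rcases le_total c u with h3 | h3 <;> rcases le_total c w with h4 | h4 <;>
    simp [min_eq_left, min_eq_right, *] <;> linarith

private lemma trunc_submod {α : Type*} [Fintype α] [DecidableEq α]
    (m : α → ℝ) (hm : ∀ i, 0 ≤ m i) (c : ℝ) (A B : Finset α) :
    min c (∑ i ∈ A ∪ B, m i) + min c (∑ i ∈ A ∩ B, m i) ≤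
      min c (∑ i ∈ A, m i) + min c (∑ i ∈ B, m i) := by
  apply min_lemma
  · exact Finset.sum_union_inter
  · exact Finset.sum_le_sum_of_subset_of_nonneg (Finset.inter_subset_left)
      (fun i _ _ => hm i)
  · exact Finset.sum_le_sum_of_subset_of_nonneg (Finset.inter_subset_right)
      (fun i _ _ => hm i)

private lemma sum_ind {α : Type*} [Fintype α] [DecidableEq α]
    (A : Finset α) (g : α → ℝ) :
    ∑ u ∈ A, g u = ∑ u, (if u ∈ A then (1:ℝ) else 0) * g u := by
  simp [ite_mul, ← Finset.sum_filter, Finset.filter_mem_eq_inter]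

private lemma quad_supermod {α : Type*} [Fintype α] [DecidableEq α]
    (D : α → α → ℝ) (hD_nonneg : ∀ u v, 0 ≤ D u v) (A B : Finset α) :
    (∑ u ∈ A, ∑ v ∈ A, D u v) + (∑ u ∈ B, ∑ v ∈ B, D u v) ≤
      (∑ u ∈ A ∪ B, ∑ v ∈ A ∪ B, D u v) + (∑ u ∈ A ∩ B, ∑ v ∈ A ∩ B, D u v) := by
  have key : ∀ (S : Finset α), (∑ u ∈ S, ∑ v ∈ S, D u v) =
      ∑ u, ∑ v, (if u ∈ S then (1:ℝ) else 0) * ((if v ∈ S then (1:ℝ) else 0) * D u v) := by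
    intro S
    rw [sum_ind S]
    congr 1; ext u
    rw [sum_ind S]
    rw [Finset.mul_sum]
  rw [key A, key B, key (A ∪ B), key (A ∩ B), ← Finset.sum_add_distrib,
    ← Finset.sum_add_distrib]
  apply Finset.sum_le_sum
  intro u _
  rw [← Finset.sum_add_distrib, ← Finset.sum_add_distrib]
  apply Finset.sum_le_sum
  intro v _
  by_cases hua : u ∈ A <;> by_cases hub : u ∈ B <;>
    by_cases hva : v ∈ A <;> by_cases hvb : v ∈ B <;>
    simp [Finset.mem_union, Finset.mem_inter, hua, hub, hva, hvb] <;>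
    nlinarith [hD_nonneg u v]

/-- **Submodularity of the penalty part `pen_2`.** With `M_j ≥ 0` and `D` symmetric
nonnegative, the set function
`pen_2(A) = ∑_j min{l_j, ∑_{i∈A} M_j(i)} + ∑_j min{k_j, ∑_{i∈A} M_j(i)} − ∑_{u,v∈A} D(u,v)`
is submodular. -/
theorem pen2_submodular
    {α : Type*} [Fintype α] [DecidableEq α]
    (p : ℕ) (hp : 1 ≤ p)
    (M : Fin p → α → ℝ) (hM : ∀ j i, 0 ≤ M j i)
    (k l : Fin p → ℝ)
    (D : α → α → ℝ) (hD_symm : ∀ u v, D u v = D v u) (hD_nonneg : ∀ u v, 0 ≤ D u v)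
    (pen₂ : Finset α → ℝ)
    (hpen₂ : pen₂ = fun A =>
        (∑ j, min (l j) (∑ i ∈ A, M j i)) + (∑ j, min (k j) (∑ i ∈ A, M j i))
        - ∑ u ∈ A, ∑ v ∈ A, D u v) :
    ∀ A B : Finset α, pen₂ (A ∪ B) + pen₂ (A ∩ B) ≤ pen₂ A + pen₂ B := by
  intro A B
  subst hpen₂
  simp only
  have hl : (∑ j, min (l j) (∑ i ∈ A ∪ B, M j i)) + (∑ j, min (l j) (∑ i ∈ A ∩ B, M j i)) ≤
      (∑ j, min (l j) (∑ i ∈ A, M j i)) + (∑ j, min (l j) (∑ i ∈ B, M j i)) := by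
    rw [← Finset.sum_add_distrib, ← Finset.sum_add_distrib]
    exact Finset.sum_le_sum fun j _ => trunc_submod (M j) (hM j) (l j) A B
  have hk : (∑ j, min (k j) (∑ i ∈ A ∪ B, M j i)) + (∑ j, min (k j) (∑ i ∈ A ∩ B, M j i)) ≤
      (∑ j, min (k j) (∑ i ∈ A, M j i)) + (∑ j, min (k j) (∑ i ∈ B, M j i)) := by
    rw [← Finset.sum_add_distrib, ← Finset.sum_add_distrib]
    exact Finset.sum_le_sum fun j _ => trunc_submod (M j) (hM j) (k j) A B
  have hq := quad_supermod D hD_nonneg A B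
  linarith
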